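/- In a simply-laced irreducible root system, a positive root γ can be written as a sum of two positive roots in exactly ht(γ) − 1 ways; that is, #{ν ∈ Δ⁺ | γ − ν ∈ Δ⁺} = 2·ht(γ) − 2. -/

import Mathlib

open scoped RealInnerProductSpace

/-- Data of a crystallographic root system in a real inner product space `V`,
with simple roots indexed by a finite type `ι`. -/
structure RSD (ι V : Type*) [Fintype ι] [NormedAddCommGroup V]
    [InnerProductSpace ℝ V] where
  /-- The simple roots. -/
  sroot : ι → V
  /-- The set of roots. -/
  Δ : Set V
  finite : Δ.Finite
  zero_not_mem : (0 : V) ∉ Δ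
  sroot_mem : ∀ i, sroot i ∈ Δ
  sroot_indep : LinearIndependent ℝ sroot
  neg_mem : ∀ a ∈ Δ, -a ∈ Δ
  /-- Crystallographic condition. -/
  crys : ∀ a ∈ Δ, ∀ b ∈ Δ, ∃ n : ℤ, 2 * ⟪a, b⟫ / ⟪a, a⟫ = (n : ℝ)
  /-- The reflection associated with a vector (only specified on roots). -/
  reflect : V → (V ≃ₗ[ℝ] V)
  reflect_apply : ∀ a ∈ Δ, ∀ v : V,
    reflect a v = v - (2 * ⟪a, v⟫ / ⟪a, a⟫) • a
  reflect_root_mem : ∀ a ∈ Δ, ∀ b ∈ Δ, reflect a b ∈ Δ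
  /-- Every root is a nonnegative or nonpositive integral combination of simple roots. -/
  decomp : ∀ a ∈ Δ, (∃ c : ι → ℕ, a = ∑ i, (c i : ℝ) • sroot i) ∨
      (∃ c : ι → ℕ, a = -∑ i, (c i : ℝ) • sroot i)
  /-- Irreducibility. -/
  irred : ∀ S T : Set V, S ∪ T = Δ → (∀ a ∈ S, ∀ b ∈ T, ⟪a, b⟫ = 0) →
      S = ∅ ∨ T = ∅

namespace RSD

variable {ι V : Type*} [Fintype ι] [NormedAddCommGroup V] [InnerProductSpace ℝ V]
  (R : RSD ι V)

/-- The set of positive roots. -/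
def pos : Set V := {a ∈ R.Δ | ∃ c : ι → ℕ, a = ∑ i, (c i : ℝ) • R.sroot i}

/-- `R.le μ γ` means `μ ≼ γ`, i.e. `γ - μ` is a nonnegative integral combination
of simple roots. -/
def le (μ γ : V) : Prop := ∃ c : ι → ℕ, γ - μ = ∑ i, (c i : ℝ) • R.sroot i

/-- The Weyl group, generated by the simple reflections. -/
def W : Subgroup (V ≃ₗ[ℝ] V) :=
  Subgroup.closure (Set.range fun i => R.reflect (R.sroot i))

/-- The inversion set `N(w) = {γ ∈ Δ⁺ ∣ w γ ∈ -Δ⁺}`. -/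
def N (w : V ≃ₗ[ℝ] V) : Set V := {γ ∈ R.pos | -(w γ) ∈ R.pos}

/-- The length of `w`: minimal length of an expression of `w` as a product of
simple reflections. -/
noncomputable def len (w : V ≃ₗ[ℝ] V) : ℕ :=
  sInf {n | ∃ l : List ι, l.length = n ∧
    (l.map fun i => R.reflect (R.sroot i)).prod = w}

/-- The coroot `a∨ = 2a/(a,a)`. -/
@[nolint unusedArguments]
noncomputable def coroot (_R : RSD ι V) (a : V) : V := (2 / ⟪a, a⟫) • a

/-- `ρ`, the half-sum of the positive roots. -/
noncomputable def rho : V :=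
  (2⁻¹ : ℝ) • ∑ a ∈ (R.finite.subset (fun a ha => ha.1 : R.pos ⊆ R.Δ)).toFinset, a

/-- `R.HtIs γ n` : the height of `γ` is `n`. -/
def HtIs (γ : V) (n : ℕ) : Prop :=
  ∃ c : ι → ℕ, γ = ∑ i, (c i : ℝ) • R.sroot i ∧ ∑ i, c i = n

/-- A long root: a root of maximal squared length. -/
def IsLong (γ : V) : Prop := γ ∈ R.Δ ∧ ∀ b ∈ R.Δ, ⟪b, b⟫ ≤ ⟪γ, γ⟫

/-- The highest root. -/
def IsHighest (θ : V) : Prop := θ ∈ R.pos ∧ ∀ γ ∈ R.pos, R.le γ θ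

/-- Simply-laced: all roots have the same length. -/
def SimplyLaced : Prop := ∀ a ∈ R.Δ, ∀ b ∈ R.Δ, ⟪a, a⟫ = ⟪b, b⟫

/-- A minimal inversion complete set. -/
def IsMICS (F : Set (V ≃ₗ[ℝ] V)) : Prop :=
  (∀ w ∈ F, w ∈ R.W) ∧ (⋃ w ∈ F, R.N w) = R.pos ∧
    ∀ F' ⊂ F, (⋃ w ∈ F', R.N w) ≠ R.pos

variable {ι V : Type*} [Fintype ι] [NormedAddCommGroup V] [InnerProductSpace ℝ V]
  {R : RSD ι V}

lemma root_ne_zero {a : V} (ha : a ∈ R.Δ) : a ≠ 0 := fun h => R.zero_not_mem (h ▸ ha)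

lemma inner_self_pos' {a : V} (ha : a ∈ R.Δ) : 0 < ⟪a, a⟫ :=
  lt_of_le_of_ne real_inner_self_nonneg
    (fun h0 => root_ne_zero ha (inner_self_eq_zero.mp h0.symm))

lemma coeff_unique {a b : ι → ℝ} (h : ∑ i, a i • R.sroot i = ∑ i, b i • R.sroot i) :
    a = b := by
  funext i
  have h2 : ∑ i, (a i - b i) • R.sroot i = 0 := by
    simp [sub_smul, Finset.sum_sub_distrib, h]
  have := Fintype.linearIndependent_iff.mp R.sroot_indep _ h2 i
  linarith

lemma ht_one_le {ν : V} (hν : ν ∈ R.Δ) {c : ι → ℕ}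
    (hc : ν = ∑ i, (c i : ℝ) • R.sroot i) : 1 ≤ ∑ i, c i := by
  by_contra h
  push_neg at h
  interval_cases h' : (∑ i, c i)
  · have : ∀ i ∈ Finset.univ, c i = 0 := (Finset.sum_eq_zero_iff.mp h')
    have hν0 : ν = 0 := by
      rw [hc, Finset.sum_eq_zero]
      intro i hi
      rw [this i hi]; simp
    exact root_ne_zero hν hν0

lemma neg_not_pos {a : V} (ha : a ∈ R.pos) : -a ∉ R.pos := by
  rintro hb
  obtain ⟨c, hc⟩ := ha.2
  obtain ⟨d, hd⟩ := hb.2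
  have h : ∑ i, ((c i : ℝ) + (d i : ℝ)) • R.sroot i = ∑ i, (0 : ℝ) • R.sroot i := by
    have : a + -a = ∑ i, (c i : ℝ) • R.sroot i + ∑ i, (d i : ℝ) • R.sroot i := by
      rw [← hc, ← hd]
    simp only [add_neg_cancel] at this
    simp [add_smul, Finset.sum_add_distrib, ← this]
  have hco := congrFun (coeff_unique h)
  have hzero : ∀ i, (c i : ℝ) = 0 := by
    intro i
    have := hco i
    have h1 : (0:ℝ) ≤ (c i : ℝ) := Nat.cast_nonneg _
    have h2 : (0:ℝ) ≤ (d i : ℝ) := Nat.cast_nonneg _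
    linarith
  have : a = 0 := by
    rw [hc, Finset.sum_eq_zero]
    intro i _
    rw [hzero i]; simp
  exact root_ne_zero ha.1 this

lemma inner_eq_and_sub_mem (hsl : R.SimplyLaced) {a b : V} (ha : a ∈ R.Δ) (hb : b ∈ R.Δ)
    (hip : 0 < ⟪a, b⟫) (hne : a ≠ b) :
    2 * ⟪a, b⟫ / ⟪a, a⟫ = 1 ∧ a - b ∈ R.Δ := by
  have hL0 : 0 < ⟪a, a⟫ := inner_self_pos' ha
  have hbb : ⟪b, b⟫ = ⟪a, a⟫ := hsl b hb a ha
  obtain ⟨m, hm⟩ := R.crys a ha b hb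
  have hab : 2 * ⟪a, b⟫ = (m : ℝ) * ⟪a, a⟫ := by
    field_simp at hm
    linarith
  have hm1 : (1 : ℝ) ≤ (m : ℝ) := by
    have h0 : (0 : ℝ) < (m : ℝ) := by
      nlinarith
    have : (0:ℤ) < m := by exact_mod_cast h0
    exact_mod_cast this
  have hsq : ⟪a - b, a - b⟫ = (2 - (m : ℝ)) * ⟪a, a⟫ := by
    rw [real_inner_sub_sub_self]
    linarith
  have hm2 : (m : ℝ) < 2 := by
    by_contra h
    push_neg at h
    rcases eq_or_lt_of_le h with he | hlt
    · have h0 : ⟪a - b, a - b⟫ = 0 := by rw [hsq, ← he]; ring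
      exact hne (sub_eq_zero.mp (inner_self_eq_zero.mp h0))
    · have h0 : ⟪a - b, a - b⟫ < 0 := by
        rw [hsq]; nlinarith
      linarith [real_inner_self_nonneg (x := a - b)]
  have hmval : (m : ℝ) = 1 := by
    have : m = 1 := by
      have h1 : (1 : ℤ) ≤ m := by exact_mod_cast hm1
      have h2 : m < 2 := by exact_mod_cast hm2
      omega
    exact_mod_cast this
  have hone : 2 * ⟪a, b⟫ / ⟪a, a⟫ = 1 := by rw [hm, hmval]
  refine ⟨hone, ?_⟩
  have hmem := R.reflect_root_mem a ha b hb
  rw [R.reflect_apply a ha b, hone, one_smul] at hmem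
  have := R.neg_mem _ hmem
  simpa using this

lemma reflect_reflect {a : V} (ha : a ∈ R.Δ) (v : V) :
    R.reflect a (R.reflect a v) = v := by
  have hL : ⟪a, a⟫ ≠ 0 := ne_of_gt (inner_self_pos' ha)
  rw [R.reflect_apply a ha, R.reflect_apply a ha v, inner_sub_right, real_inner_smul_right]
  have h2 : 2 * (⟪a, v⟫ - 2 * ⟪a, v⟫ / ⟪a, a⟫ * ⟪a, a⟫) / ⟪a, a⟫
      = -(2 * ⟪a, v⟫ / ⟪a, a⟫) := by
    field_simp
    ring
  rw [h2]
  module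

lemma eq_sroot_of_smul (hsl : R.SimplyLaced) {ν : V} {i0 : ι} {c : ℝ} (hc0 : 0 ≤ c)
    (hν : ν ∈ R.Δ) (h : ν = c • R.sroot i0) : ν = R.sroot i0 := by
  have hα := R.sroot_mem i0
  have hL : 0 < ⟪R.sroot i0, R.sroot i0⟫ := inner_self_pos' hα
  have hvv : ⟪ν, ν⟫ = ⟪R.sroot i0, R.sroot i0⟫ := hsl ν hν _ hα
  have hc2 : c ^ 2 * ⟪R.sroot i0, R.sroot i0⟫ = ⟪R.sroot i0, R.sroot i0⟫ := by
    have hx : ⟪ν, ν⟫ = c ^ 2 * ⟪R.sroot i0, R.sroot i0⟫ := by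
      rw [h, real_inner_smul_left, real_inner_smul_right]
      ring
    linarith
  have hcc : c ^ 2 = 1 := mul_right_cancel₀ (ne_of_gt hL) (by linarith)
  have hfac : (c - 1) * (c + 1) = 0 := by ring_nf; linarith
  have hc1 : c = 1 := by
    rcases mul_eq_zero.mp hfac with h' | h'
    · linarith
    · linarith
  rw [h, hc1, one_smul]

lemma reflect_simple_pos (hsl : R.SimplyLaced) {ν : V} (i0 : ι) (hν : ν ∈ R.pos)
    (hne : ν ≠ R.sroot i0) : R.reflect (R.sroot i0) ν ∈ R.pos := by
  classical
  set α := R.sroot i0 with hα'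
  have hα : α ∈ R.Δ := R.sroot_mem i0
  have hmem : R.reflect α ν ∈ R.Δ := R.reflect_root_mem α hα ν hν.1
  rcases R.decomp _ hmem with ⟨e, he⟩ | ⟨e, he⟩
  · exact ⟨hmem, e, he⟩
  · exfalso
    obtain ⟨c, hc⟩ := hν.2
    rw [R.reflect_apply α hα ν] at he
    set t := 2 * ⟪α, ν⟫ / ⟪α, α⟫ with ht
    have h2 : ∑ i, (c i : ℝ) • R.sroot i + ∑ i, (e i : ℝ) • R.sroot i = t • α := by
      rw [← hc]
      have h3 := sub_eq_iff_eq_add.mp he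
      rw [h3]
      abel
    have key : ∑ i, ((c i : ℝ) + (e i : ℝ)) • R.sroot i
        = ∑ i, (if i = i0 then t else 0) • R.sroot i := by
      have h1 : ∑ i, (if i = i0 then t else 0) • R.sroot i = t • α := by
        simp [ite_smul, hα']
      rw [h1]
      simpa [add_smul, Finset.sum_add_distrib] using h2
    have hco := congrFun (coeff_unique key)
    have hzero : ∀ i, i ≠ i0 → (c i : ℝ) = 0 := by
      intro i hi
      have := hco i
      simp only [if_neg hi] at this
      have h1 : (0:ℝ) ≤ (c i : ℝ) := Nat.cast_nonneg _
      have h2 : (0:ℝ) ≤ (e i : ℝ) := Nat.cast_nonneg _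
      linarith
    have hν' : ν = (c i0 : ℝ) • α := by
      rw [hc, Finset.sum_eq_single i0
        (fun b _ hb => by rw [hzero b hb, zero_smul])
        (fun hb => absurd (Finset.mem_univ i0) hb)]
    exact hne (eq_sroot_of_smul hsl (Nat.cast_nonneg _) hν.1 hν')
end RSD

/-- In a simply-laced root system a positive root `γ` can be written
as a sum of two positive roots in exactly `ht(γ) - 1` ways:
`#{ν ∈ Δ⁺ ∣ γ - ν ∈ Δ⁺} = 2 ht(γ) - 2`. -/
theorem card_decompositions_eq
    {ι V : Type*} [Fintype ι] [NormedAddCommGroup V] [InnerProductSpace ℝ V]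
    (R : RSD ι V) (hsl : R.SimplyLaced) (γ : V) (hγ : γ ∈ R.pos)
    (n : ℕ) (hht : R.HtIs γ n) :
    {ν ∈ R.pos | γ - ν ∈ R.pos}.ncard = 2 * n - 2 := by
  classical
  induction n using Nat.strong_induction_on generalizing γ hγ with
  | _ n ih =>
  obtain ⟨c, hc, hcs⟩ := hht
  rcases Nat.lt_or_ge n 2 with hn | hn
  · -- base cases n = 0 and n = 1
    interval_cases n
    · exfalso
      have hγ0 : γ = 0 := by
        rw [hc, Finset.sum_eq_zero]
        intro i hi
        rw [Finset.sum_eq_zero_iff.mp hcs i hi]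
        simp
      exact R.zero_not_mem (hγ0 ▸ hγ.1)
    · have hempty : {ν ∈ R.pos | γ - ν ∈ R.pos} = ∅ := by
        ext ν
        simp only [Set.mem_setOf_eq, Set.mem_empty_iff_false, iff_false, not_and]
        intro hν hμ
        obtain ⟨a, ha⟩ := hν.2
        obtain ⟨b, hb⟩ := hμ.2
        have hsum : ∑ i, ((a i : ℝ) + (b i : ℝ)) • R.sroot i
            = ∑ i, (c i : ℝ) • R.sroot i := by
          have h0 : (∑ i, (a i : ℝ) • R.sroot i) + (∑ i, (b i : ℝ) • R.sroot i)
              = ∑ i, (c i : ℝ) • R.sroot i := by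
            rw [← ha, ← hb, ← hc]
            abel
          simpa [add_smul, Finset.sum_add_distrib] using h0
        have hco := congrFun (RSD.coeff_unique hsum)
        have h1 : 1 ≤ ∑ i, a i := RSD.ht_one_le hν.1 ha
        have h2 : 1 ≤ ∑ i, b i := RSD.ht_one_le hμ.1 hb
        have hcast : ((∑ i, a i : ℕ) : ℝ) + ((∑ i, b i : ℕ) : ℝ)
            = ((∑ i, c i : ℕ) : ℝ) := by
          push_cast
          rw [← Finset.sum_add_distrib]
          exact Finset.sum_congr rfl (fun i _ => hco i)
        have hnat : (∑ i, a i) + (∑ i, b i) = ∑ i, c i := by exact_mod_cast hcast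
        omega
      rw [hempty]
      simp
  · -- main case : n ≥ 2
    have hγΔ := hγ.1
    have hgg : 0 < ⟪γ, γ⟫ := RSD.inner_self_pos' hγΔ
    -- find a simple root pairing positively with γ
    have hexists : ∃ i0 : ι, 0 < ⟪γ, R.sroot i0⟫ := by
      by_contra h
      push_neg at h
      have hle : ⟪γ, γ⟫ ≤ 0 := by
        nth_rewrite 2 [hc]
        rw [inner_sum]
        apply Finset.sum_nonpos
        intro i _
        rw [real_inner_smul_right]
        exact mul_nonpos_of_nonneg_of_nonpos (Nat.cast_nonneg _) (h i)
      linarith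
    obtain ⟨i0, hi0⟩ := hexists
    set α := R.sroot i0 with hαdef
    have hαΔ : α ∈ R.Δ := R.sroot_mem i0
    have hαpos : α ∈ R.pos := by
      refine ⟨hαΔ, fun i => if i = i0 then 1 else 0, ?_⟩
      simp [ite_smul, apply_ite (fun x : ℕ => (x : ℝ)), hαdef]
    have hLα : 0 < ⟪α, α⟫ := RSD.inner_self_pos' hαΔ
    -- γ ≠ α since ht γ ≥ 2
    have hγα : γ ≠ α := by
      intro h
      have hδ : α = ∑ i, ((if i = i0 then 1 else 0 : ℕ) : ℝ) • R.sroot i := by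
        simp [ite_smul, apply_ite (fun x : ℕ => (x : ℝ)), hαdef]
      rw [h, hδ] at hc
      have hco := congrFun (RSD.coeff_unique hc)
      have hcval : ∀ i, c i = if i = i0 then 1 else 0 := by
        intro i
        have h := (hco i).symm
        rcases eq_or_ne i i0 with rfl | hne
        · simp only [if_pos rfl] at h ⊢
          exact_mod_cast h
        · simp only [if_neg hne] at h ⊢
          exact_mod_cast h
      rw [Finset.sum_congr rfl (fun i _ => hcval i)] at hcs
      simp at hcs
      omega
    obtain ⟨hone, hsubΔ⟩ := RSD.inner_eq_and_sub_mem hsl hγΔ hαΔ hi0 hγα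
    have hαα : ⟪α, α⟫ = ⟪γ, γ⟫ := hsl α hαΔ γ hγΔ
    have honeα : 2 * ⟪α, γ⟫ / ⟪α, α⟫ = 1 := by
      rw [real_inner_comm, hαα]
      exact hone
    have htwo : 2 * ⟪γ, α⟫ = ⟪γ, γ⟫ := by
      field_simp at hone
      linarith
    set β := γ - α with hβdef
    have hβΔ : β ∈ R.Δ := hsubΔ
    have hreflγ : R.reflect α γ = β := by
      rw [R.reflect_apply α hαΔ γ, honeα, one_smul]
    have hreflβ : R.reflect α β = γ := by
      rw [← hreflγ, RSD.reflect_reflect hαΔ]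
    -- β is a positive root
    have hβpos : β ∈ R.pos := by
      rcases R.decomp β hβΔ with ⟨e, he⟩ | ⟨e, he⟩
      · exact ⟨hβΔ, e, he⟩
      · exfalso
        have hγeq : γ = α - ∑ i, (e i : ℝ) • R.sroot i := by
          have : γ = β + α := by rw [hβdef]; abel
          rw [this, he]; abel
        have hγeq2 : ∑ i, (c i : ℝ) • R.sroot i
            = ∑ i, (((if i = i0 then 1 else 0 : ℕ) : ℝ) - (e i : ℝ)) • R.sroot i := by
          rw [← hc]
          rw [hγeq]
          simp [sub_smul, Finset.sum_sub_distrib, ite_smul, apply_ite (fun x : ℕ => (x : ℝ)), hαdef]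
        have hco := congrFun (RSD.coeff_unique hγeq2)
        have hsum : ((∑ i, c i : ℕ) : ℝ) ≤ 1 := by
          push_cast
          calc ∑ i, (c i : ℝ) = ∑ i, (((if i = i0 then 1 else 0 : ℕ) : ℝ) - (e i : ℝ)) :=
                Finset.sum_congr rfl (fun i _ => hco i)
            _ ≤ ∑ i, ((if i = i0 then 1 else 0 : ℕ) : ℝ) := by
                apply Finset.sum_le_sum
                intro i _
                have : (0:ℝ) ≤ (e i : ℝ) := Nat.cast_nonneg _
                linarith
            _ = 1 := by simp
        rw [hcs] at hsum
        have : n ≤ 1 := by exact_mod_cast hsum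
        omega
    obtain ⟨d, hd⟩ := hβpos.2
    -- height of β is n - 1
    have hds : ∑ i, d i = n - 1 := by
      have hβeq : ∑ i, (d i : ℝ) • R.sroot i
          = ∑ i, ((c i : ℝ) - ((if i = i0 then 1 else 0 : ℕ) : ℝ)) • R.sroot i := by
        rw [← hd, hβdef, hc]
        simp [sub_smul, Finset.sum_sub_distrib, ite_smul, apply_ite (fun x : ℕ => (x : ℝ)), hαdef]
      have hco := congrFun (RSD.coeff_unique hβeq)
      have hcast : ((∑ i, d i : ℕ) : ℝ) = ((n : ℝ)) - 1 := by
        push_cast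
        calc ∑ i, (d i : ℝ) = ∑ i, ((c i : ℝ) - ((if i = i0 then 1 else 0 : ℕ) : ℝ)) :=
              Finset.sum_congr rfl (fun i _ => hco i)
          _ = ((∑ i, c i : ℕ) : ℝ) - 1 := by
              rw [Finset.sum_sub_distrib]
              push_cast
              simp
          _ = (n : ℝ) - 1 := by rw [hcs]
      have : ((∑ i, d i : ℕ) : ℝ) = ((n - 1 : ℕ) : ℝ) := by
        rw [hcast]
        push_cast [Nat.cast_sub (by omega : 1 ≤ n)]
        ring
      exact_mod_cast this
    -- α ≠ β
    have hαβ : α ≠ β := by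
      intro h
      have hγ2α : γ = α + α := by
        have h2 : α = γ - α := by conv_lhs => rw [h, hβdef]
        rw [eq_sub_iff_add_eq] at h2
        exact h2.symm
      have : ⟪α, γ⟫ = 2 * ⟪α, α⟫ := by
        rw [hγ2α, inner_add_right]; ring
      rw [this] at honeα
      field_simp at honeα
      linarith
    -- γ - 2α is not a root
    have hno2α : β - α ∉ R.Δ := by
      intro hmem
      have hlen : ⟪β - α, β - α⟫ = ⟪γ, γ⟫ := hsl _ hmem γ hγΔ
      have hββ : ⟪β, β⟫ = ⟪γ, γ⟫ := hsl β hβΔ γ hγΔ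
      have hexp : ⟪β - α, β - α⟫ = ⟪β, β⟫ - 2 * ⟪β, α⟫ + ⟪α, α⟫ :=
        real_inner_sub_sub_self β α
      have hβα : ⟪β, α⟫ = ⟪γ, α⟫ - ⟪α, α⟫ := by
        rw [hβdef, inner_sub_left]
      rw [hexp, hββ, hβα, hαα] at hlen
      nlinarith
    -- the two sets
    set A := {ν ∈ R.pos | γ - ν ∈ R.pos} with hA
    set B := {ν ∈ R.pos | β - ν ∈ R.pos} with hB
    have hAfin : A.Finite := R.finite.subset (fun ν hν => hν.1.1)
    have hBfin : B.Finite := R.finite.subset (fun ν hν => hν.1.1)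
    have ihB : B.ncard = 2 * (n - 1) - 2 :=
      ih (n - 1) (by omega) β hβpos ⟨d, hd, hds⟩
    -- the bijection
    have himg : (fun v => R.reflect α v) '' (A \ {α, β}) = B := by
      ext μ
      constructor
      · rintro ⟨ν, ⟨⟨hν1, hν2⟩, hν3⟩, rfl⟩
        simp only [Set.mem_insert_iff, Set.mem_singleton_iff, not_or] at hν3
        obtain ⟨hνα, hνβ⟩ := hν3
        refine ⟨RSD.reflect_simple_pos hsl i0 hν1 hνα, ?_⟩
        have heq : β - R.reflect α ν = R.reflect α (γ - ν) := by
          rw [map_sub, hreflγ]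
        rw [heq]
        refine RSD.reflect_simple_pos hsl i0 hν2 ?_
        intro h
        rw [← hαdef] at h
        exact hνβ (by rw [hβdef, ← h]; abel)
      · rintro ⟨hμ1, hμ2⟩
        have hμα : μ ≠ α := by
          rintro rfl
          exact hno2α hμ2.1
        have hβμα : β - μ ≠ α := by
          intro h
          have : μ = β - α := by rw [← h]; abel
          rw [this] at hμ1
          exact hno2α hμ1.1
        refine ⟨R.reflect α μ, ⟨⟨RSD.reflect_simple_pos hsl i0 hμ1 hμα, ?_⟩, ?_⟩,
          RSD.reflect_reflect hαΔ μ⟩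
        · have heq : γ - R.reflect α μ = R.reflect α (β - μ) := by
            rw [map_sub, hreflβ]
          rw [heq]
          exact RSD.reflect_simple_pos hsl i0 hμ2 hβμα
        · simp only [Set.mem_insert_iff, Set.mem_singleton_iff, not_or]
          constructor
          · intro h
            have hμeq : μ = R.reflect α α :=
              (RSD.reflect_reflect hαΔ μ).symm.trans (congrArg _ h)
            have hrα : R.reflect α α = -α := by
              rw [R.reflect_apply α hαΔ α]
              have h2 : 2 * ⟪α, α⟫ / ⟪α, α⟫ = 2 := by field_simp
              rw [h2, two_smul]
              abel
            rw [hμeq, hrα] at hμ1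
            exact RSD.neg_not_pos hαpos hμ1
          · intro h
            have hμeq : μ = R.reflect α β :=
              (RSD.reflect_reflect hαΔ μ).symm.trans (congrArg _ h)
            rw [hμeq, hreflβ] at hμ2
            have : β - γ = -α := by rw [hβdef]; abel
            rw [this] at hμ2
            exact RSD.neg_not_pos hαpos hμ2
    have hinj : Function.Injective (fun v : V => R.reflect α v) := (R.reflect α).injective
    have hcard1 : (A \ {α, β}).ncard = B.ncard := by
      rw [← himg, Set.ncard_image_of_injective _ hinj]
    have hαA : α ∈ A := ⟨hαpos, by rw [show γ - α = β from rfl]; exact hβpos⟩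
    have hβA : β ∈ A := ⟨hβpos, by rw [show γ - β = α by rw [hβdef]; abel]; exact hαpos⟩
    have hsubA : ({α, β} : Set V) ⊆ A :=
      Set.insert_subset hαA (Set.singleton_subset_iff.mpr hβA)
    have hsplit : A = (A \ {α, β}) ∪ {α, β} := by
      rw [Set.diff_union_self, Set.union_eq_self_of_subset_right hsubA]
    have hcount : A.ncard = (A \ {α, β}).ncard + 2 := by
      conv_lhs => rw [hsplit]
      rw [Set.ncard_union_eq Set.disjoint_sdiff_left (hAfin.diff)
        ((Set.finite_singleton β).insert α), Set.ncard_pair hαβ]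
    rw [hcount, hcard1, ihB]
    omega
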